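/- Let f : S → T be a minor embedding of rooted trees and suppose a, b ∈ V(S) are incomparable (no directed path between them in S). If c is any node of T lying on the path from f's image of the LCA of a and b to f(b), and f(a) lies strictly on that path, then there is a directed path from f(a) to f(b) in T; consequently such a configuration contradicts Lemma 4, so f(a) cannot be an intermediate node of the tree path from f(lca(a,b)) to f(b). -/

import Mathlib

/-- A directed path in a graph `E`, given as a nonempty list of visited nodes
from `a` to `b` (endpoints included). A trivial path is `[a]` with `a = b`. -/
def IsPath {V : Type*} (E : V → V → Prop) (p : List V) (a b : V) : Prop :=
  p.Chain' E ∧ p.head? = some a ∧ p.getLast? = some b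

/-- There is a (possibly trivial) directed path from `a` to `b`. -/
def Reach {V : Type*} (E : V → V → Prop) (a b : V) : Prop :=
  ∃ p : List V, IsPath E p a b

/-- A rooted tree: a finite directed graph with root `r` such that every node is
reachable from `r` by a unique directed path (and there are no self-loops). -/
structure IsRootedTree {V : Type*} [Fintype V] (E : V → V → Prop) (r : V) : Prop where
  no_self : ∀ v, ¬ E v v
  reach : ∀ v, ∃ p : List V, IsPath E p r v
  path_unique : ∀ v (p q : List V), IsPath E p r v → IsPath E q r v → p = q

/-- A minor embedding `f : S → T`: an injective node map such that every arc `(a,b)`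
of `S` maps to a directed path from `f a` to `f b` in `T` with no intermediate node
in the image of `f`. -/
def IsMinorEmb {V W : Type*} (ES : V → V → Prop) (ET : W → W → Prop) (f : V → W) : Prop :=
  Function.Injective f ∧
    ∀ a b, ES a b → ∃ p : List W, IsPath ET p (f a) (f b) ∧
      ∀ x ∈ p.tail.dropLast, x ∉ Set.range f

section Aux

variable {V : Type*} {E : V → V → Prop}

lemma path_head_cons {p : List V} {a b : V} (h : IsPath E p a b) :
    ∃ t, p = a :: t := by
  obtain ⟨_, hh, _⟩ := h
  cases p with
  | nil => simp at hh
  | cons x t => simp at hh; exact ⟨t, by rw [hh]⟩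

lemma reach_refl (a : V) : Reach E a a :=
  ⟨[a], by simp [IsPath, List.Chain', List.isChain_singleton]⟩

lemma isPath_tail {a y b : V} {ys : List V} (h : IsPath E (a :: y :: ys) a b) :
    IsPath E (y :: ys) y b := by
  obtain ⟨hc, _, hl⟩ := h
  exact ⟨hc.tail, rfl, by simpa [List.getLast?_cons_cons] using hl⟩

lemma reach_of_mem {b x : V} :
    ∀ (p : List V) (a : V), IsPath E p a b → x ∈ p → Reach E x b := by
  intro p
  induction p with
  | nil => intro a h hx; simp at hx
  | cons hd tl ih =>
    intro a h hx
    have hhd : hd = a := by simpa using h.2.1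
    subst hhd
    rcases List.mem_cons.mp hx with rfl | hx
    · exact ⟨_ :: tl, h⟩
    · cases tl with
      | nil => simp at hx
      | cons y ys => exact ih y (isPath_tail h) hx

lemma isPath_append {p q : List V} {a b c : V}
    (hp : IsPath E p a b) (hq : IsPath E q b c) : IsPath E (p ++ q.tail) a c := by
  obtain ⟨t, rfl⟩ := path_head_cons hq
  obtain ⟨pt, rfl⟩ := path_head_cons hp
  cases t with
  | nil =>
    have hbc : b = c := by simpa using hq.2.2
    subst hbc
    simpa using hp
  | cons y ys =>
    refine ⟨?_, by simp, ?_⟩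
    · rw [List.tail_cons, List.Chain', List.isChain_append]
      refine ⟨hp.1, hq.1.tail, ?_⟩
      intro x hx z hz
      have hx' : x = b := by
        have h2 := hp.2.2
        rw [h2] at hx
        have := (by simpa using hx : b = x)
        exact this.symm
      have hz' : z = y := (by simpa using hz : y = z).symm
      subst hx'; subst hz'
      exact (List.isChain_cons_cons.mp hq.1).1
    · rw [List.tail_cons, List.getLast?_append]
      have : (y :: ys).getLast? = some c := by
        have := hq.2.2
        rwa [List.getLast?_cons_cons] at this
      simp [this]

lemma reach_trans {a b c : V} (h1 : Reach E a b) (h2 : Reach E b c) : Reach E a c := by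
  obtain ⟨p, hp⟩ := h1
  obtain ⟨q, hq⟩ := h2
  exact ⟨p ++ q.tail, isPath_append hp hq⟩

lemma mem_decomp {p : List V} {a b x : V} (h : IsPath E p a b) (hx : x ∈ p) :
    x = a ∨ x = b ∨ x ∈ p.tail.dropLast := by
  obtain ⟨t, rfl⟩ := path_head_cons h
  rcases List.mem_cons.mp hx with rfl | hx
  · exact Or.inl rfl
  cases t with
  | nil => simp at hx
  | cons y ys =>
    have hlast : (y :: ys).getLast (by simp) = b := by
      have h2 := h.2.2
      rw [List.getLast?_cons_cons, List.getLast?_eq_getLast (by simp)] at h2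
      simpa using h2
    have hx' : x ∈ (y :: ys).dropLast ++ [(y :: ys).getLast (by simp)] := by
      rw [List.dropLast_append_getLast]; exact hx
    rcases List.mem_append.mp hx' with hx' | hx'
    · exact Or.inr (Or.inr (by simpa using hx'))
    · exact Or.inr (Or.inl (by rw [← hlast]; simpa using hx'))

lemma path_unique' {V : Type*} [Fintype V] {E : V → V → Prop} {r : V}
    (hT : IsRootedTree E r) {u v : V} {p q : List V}
    (hp : IsPath E p u v) (hq : IsPath E q u v) : p = q := by
  obtain ⟨P, hP⟩ := hT.reach u
  have heq := hT.path_unique v _ _ (isPath_append hP hp) (isPath_append hP hq)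
  have htl : p.tail = q.tail := List.append_cancel_left heq
  obtain ⟨pt, rfl⟩ := path_head_cons hp
  obtain ⟨qt, rfl⟩ := path_head_cons hq
  simpa using htl

lemma emb_path {VS VT : Type*} {ES : VS → VS → Prop} {ET : VT → VT → Prop}
    {f : VS → VT} (hf : IsMinorEmb ES ET f) :
    ∀ (q : List VS) (u v : VS), IsPath ES q u v →
      ∃ p, IsPath ET p (f u) (f v) ∧
        ∀ x ∈ p, x ∈ Set.range f → ∃ w, x = f w ∧ Reach ES u w ∧ Reach ES w v := by
  intro q
  induction q with
  | nil => intro u v h; exact absurd h.2.1 (by simp)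
  | cons hd tl ih =>
    intro u v h
    have hhd : hd = u := by simpa using h.2.1
    subst hhd
    cases tl with
    | nil =>
      have huv : hd = v := by simpa using h.2.2
      subst huv
      refine ⟨[f hd], ⟨List.isChain_singleton _, rfl, rfl⟩, ?_⟩
      intro x hx _
      have : x = f hd := by simpa using hx
      subst this
      exact ⟨hd, rfl, reach_refl hd, reach_refl hd⟩
    | cons y ys =>
      have hE : ES hd y := (List.isChain_cons_cons.mp h.1).1
      have huy : Reach ES hd y := ⟨[hd, y], by simp [IsPath, List.Chain', hE]⟩
      have htl : IsPath ES (y :: ys) y v := isPath_tail h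
      obtain ⟨p', hp', hprop⟩ := ih y v htl
      obtain ⟨s, hs, hsint⟩ := hf.2 hd y hE
      refine ⟨s ++ p'.tail, isPath_append hs hp', ?_⟩
      intro x hx hxr
      rcases List.mem_append.mp hx with hx | hx
      · rcases mem_decomp hs hx with rfl | rfl | hint
        · exact ⟨hd, rfl, reach_refl hd, ⟨hd :: y :: ys, h⟩⟩
        · exact ⟨y, rfl, huy, ⟨y :: ys, htl⟩⟩
        · exact absurd hxr (hsint _ hint)
      · have hx' : x ∈ p' := by
          obtain ⟨t', rfl⟩ := path_head_cons hp'
          exact List.mem_cons_of_mem _ hx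
        obtain ⟨w, rfl, hw1, hw2⟩ := hprop x hx' hxr
        exact ⟨w, rfl, reach_trans huy hw1, hw2⟩

end Aux

/-- Let `f : S → T` be a minor embedding and let `a, b` be incomparable nodes of
`S` with lowest common ancestor `l`. For any path `p` in `T` from `f l` to `f b`:
if `f a` were an intermediate node of `p` then there would be a directed path from
`f a` to `f b` in `T`; consequently (by Lemma 4) `f a` cannot be an intermediate
node of `p`. -/
theorem stmt19 {VS VT : Type*} [Fintype VS] [Fintype VT]
    (ES : VS → VS → Prop) (rS : VS) (ET : VT → VT → Prop) (rT : VT)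
    (hS : IsRootedTree ES rS) (hT : IsRootedTree ET rT)
    (f : VS → VT) (hf : IsMinorEmb ES ET f)
    (a b l : VS)
    (hab : ¬ Reach ES a b) (hba : ¬ Reach ES b a)
    (hla : Reach ES l a) (hlb : Reach ES l b)
    (hlca : ∀ d : VS, Reach ES d a → Reach ES d b → Reach ES d l)
    (p : List VT) (hp : IsPath ET p (f l) (f b)) :
    (f a ∈ p.tail.dropLast → Reach ET (f a) (f b)) ∧ f a ∉ p.tail.dropLast := by
  have hmem : f a ∈ p.tail.dropLast → f a ∈ p := fun h =>
    (List.tail_sublist p).subset ((List.dropLast_sublist _).subset h)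
  constructor
  · intro h
    exact reach_of_mem p (f l) hp (hmem h)
  · intro h
    obtain ⟨q, hq⟩ := hlb
    obtain ⟨p₂, hp₂, hprop⟩ := emb_path hf q l b hq
    have hpe : p = p₂ := path_unique' hT hp hp₂
    obtain ⟨w, hw, _, hwb⟩ := hprop (f a) (hpe ▸ hmem h) ⟨a, rfl⟩
    have haw : a = w := hf.1 hw
    exact hab (haw ▸ hwb)
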